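/- arXiv:1206.6039 — 2 statements merged into one kernel-verified Lean document; each statement's English description precedes it below -/
import Mathlib

section
/- The map K_P : S⁺ → ℝ^{N×n}, K_P(P) = 2·P·(PᵀP)⁻¹·S(PᵀP)/det(PᵀP)^{1/n}, is differentiable at every P ∈ S⁺; denote by DK_P(P)[Q] its derivative at P in the direction Q ∈ ℝ^{N×n}. Then for every w ∈ ℝ^N with K_P(P)ᵀw = 0 and every Q ∈ ℝ^{N×n}, one has the identity (DK_P(P)[Q])ᵀ·w = (2/det(PᵀP)^{1/n})·[ (I − (|P|²/n)·(PᵀP)⁻¹)·Qᵀw + (PᵀP)⁻¹·S(QᵀP + PᵀQ)·Pᵀw ] in ℝⁿ. -/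
open Matrix

attribute [local instance] Matrix.frobeniusNormedAddCommGroup Matrix.frobeniusNormedSpace

/-- The Ahlfors operator `S(A) = (A + Aᵀ)/2 − (tr(A)/n)·I`. -/
noncomputable def ahl {n : ℕ} (A : Matrix (Fin n) (Fin n) ℝ) : Matrix (Fin n) (Fin n) ℝ :=
  (2⁻¹ : ℝ) • (A + Aᵀ) - (A.trace / (n : ℝ)) • 1

/-- The gradient `K_P(P) = 2·P·(PᵀP)⁻¹·S(PᵀP)/det(PᵀP)^(1/n)` of the dilation with
respect to the Frobenius inner product. -/
noncomputable def dilGrad {N n : ℕ} (P : Matrix (Fin N) (Fin n) ℝ) : Matrix (Fin N) (Fin n) ℝ :=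
  (2 / (Pᵀ * P).det ^ ((1 : ℝ) / n)) • (P * (Pᵀ * P)⁻¹ * ahl (Pᵀ * P))

attribute [local instance] Matrix.frobeniusNormedRing Matrix.frobeniusNormedAlgebra

/-- Matrix multiplication as a continuous bilinear map (Frobenius norm). -/
noncomputable def mulCLM (a b c : ℕ) :
    Matrix (Fin a) (Fin b) ℝ →L[ℝ] Matrix (Fin b) (Fin c) ℝ →L[ℝ] Matrix (Fin a) (Fin c) ℝ :=
  LinearMap.toContinuousLinearMap
  { toFun := fun A => LinearMap.toContinuousLinearMap
      { toFun := fun B => A * B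
        map_add' := fun B B' => Matrix.mul_add A B B'
        map_smul' := fun r B => (Matrix.mul_smul A r B) }
    map_add' := fun A A' => by
      apply ContinuousLinearMap.ext; intro B
      simp [Matrix.add_mul]
    map_smul' := fun r A => by
      apply ContinuousLinearMap.ext; intro B
      simp [Matrix.smul_mul] }

@[simp] lemma mulCLM_apply {a b c : ℕ} (A : Matrix (Fin a) (Fin b) ℝ)
    (B : Matrix (Fin b) (Fin c) ℝ) : mulCLM a b c A B = A * B := rfl

/-- Transpose as a continuous linear map. -/
noncomputable def transCLM (a b : ℕ) :
    Matrix (Fin a) (Fin b) ℝ →L[ℝ] Matrix (Fin b) (Fin a) ℝ :=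
  LinearMap.toContinuousLinearMap
  { toFun := fun A => Aᵀ
    map_add' := fun A B => Matrix.transpose_add A B
    map_smul' := fun r A => Matrix.transpose_smul r A }

@[simp] lemma transCLM_apply {a b : ℕ} (A : Matrix (Fin a) (Fin b) ℝ) :
    transCLM a b A = Aᵀ := rfl

/-- Entry evaluation as a continuous linear map. -/
noncomputable def entryCLM {a b : ℕ} (i : Fin a) (j : Fin b) :
    Matrix (Fin a) (Fin b) ℝ →L[ℝ] ℝ :=
  LinearMap.toContinuousLinearMap
  { toFun := fun A => A i j
    map_add' := fun A B => rfl
    map_smul' := fun r A => rfl }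

@[simp] lemma entryCLM_apply {a b : ℕ} (i : Fin a) (j : Fin b)
    (A : Matrix (Fin a) (Fin b) ℝ) : entryCLM i j A = A i j := rfl

/-- Trace as a continuous linear map. -/
noncomputable def traceCLM (a : ℕ) : Matrix (Fin a) (Fin a) ℝ →L[ℝ] ℝ :=
  LinearMap.toContinuousLinearMap (Matrix.traceLinearMap (Fin a) ℝ ℝ)

@[simp] lemma traceCLM_apply {a : ℕ} (A : Matrix (Fin a) (Fin a) ℝ) :
    traceCLM a A = A.trace := rfl

lemma differentiable_det (a : ℕ) :
    Differentiable ℝ (fun A : Matrix (Fin a) (Fin a) ℝ => A.det) := by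
  have : (fun A : Matrix (Fin a) (Fin a) ℝ => A.det)
      = fun A => ∑ σ : Equiv.Perm (Fin a),
          ((Equiv.Perm.sign σ : ℤ) : ℝ) * ∏ i, A (σ i) i := by
    funext A; rw [Matrix.det_apply']
  rw [this]
  apply Differentiable.fun_sum
  intro σ _
  apply Differentiable.const_mul
  intro A
  exact (HasFDerivAt.finset_prod
    (fun i _ => (entryCLM (σ i) i).hasFDerivAt)).differentiableAt

noncomputable def sfun (N n : ℕ) (X : Matrix (Fin N) (Fin n) ℝ) : ℝ :=
  2 / (Xᵀ * X).det ^ ((1 : ℝ) / n)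

noncomputable def mfun (N n : ℕ) (X : Matrix (Fin N) (Fin n) ℝ) : Matrix (Fin N) (Fin n) ℝ :=
  X - (((n : ℝ))⁻¹ * (Xᵀ * X).trace) • (X * (Xᵀ * X)⁻¹)

lemma dilGrad_eq {N n : ℕ} (X : Matrix (Fin N) (Fin n) ℝ) (hX : (Xᵀ * X).det ≠ 0) :
    dilGrad X = sfun N n X • mfun N n X := by
  have hAt : (Xᵀ * X)ᵀ = Xᵀ * X := by
    rw [Matrix.transpose_mul, Matrix.transpose_transpose]
  have h2 : (2⁻¹ : ℝ) • ((Xᵀ * X) + (Xᵀ * X)) = Xᵀ * X := by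
    rw [← two_smul ℝ, smul_smul]; norm_num
  have hmul : X * (Xᵀ * X)⁻¹ * ahl (Xᵀ * X) = mfun N n X := by
    rw [ahl, hAt, h2, Matrix.mul_sub, Matrix.mul_smul, Matrix.mul_one, Matrix.mul_assoc,
      Matrix.nonsing_inv_mul _ (isUnit_iff_ne_zero.2 hX), Matrix.mul_one, mfun,
      div_eq_inv_mul]
  rw [dilGrad, hmul, sfun]

noncomputable def DA (N n : ℕ) (P : Matrix (Fin N) (Fin n) ℝ) :
    Matrix (Fin N) (Fin n) ℝ →L[ℝ] Matrix (Fin n) (Fin n) ℝ :=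
  (mulCLM n N n).precompR _ Pᵀ (ContinuousLinearMap.id ℝ _)
    + (mulCLM n N n).precompL _ (transCLM N n) P

@[simp] lemma DA_apply {N n : ℕ} (P Q : Matrix (Fin N) (Fin n) ℝ) :
    DA N n P Q = Pᵀ * Q + Qᵀ * P := rfl

lemma hasFDerivAt_A {N n : ℕ} (P : Matrix (Fin N) (Fin n) ℝ) :
    HasFDerivAt (fun X : Matrix (Fin N) (Fin n) ℝ => Xᵀ * X) (DA N n P) P :=
  (mulCLM n N n).hasFDerivAt_of_bilinear (transCLM N n).hasFDerivAt (hasFDerivAt_id P)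

lemma differentiable_detA {N n : ℕ} :
    Differentiable ℝ (fun X : Matrix (Fin N) (Fin n) ℝ => (Xᵀ * X).det) := fun X =>
  DifferentiableAt.comp X ((differentiable_det n) (Xᵀ * X)) (hasFDerivAt_A X).differentiableAt

noncomputable def Dinv (N n : ℕ) (P : Matrix (Fin N) (Fin n) ℝ) :
    Matrix (Fin N) (Fin n) ℝ →L[ℝ] Matrix (Fin n) (Fin n) ℝ :=
  (-(ContinuousLinearMap.mulLeftRight ℝ _ (Pᵀ * P)⁻¹ (Pᵀ * P)⁻¹)).comp (DA N n P)

@[simp] lemma Dinv_apply {N n : ℕ} (P Q : Matrix (Fin N) (Fin n) ℝ) :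
    Dinv N n P Q = -((Pᵀ * P)⁻¹ * (Pᵀ * Q + Qᵀ * P) * (Pᵀ * P)⁻¹) := rfl

lemma hasFDerivAt_invA {N n : ℕ} (P : Matrix (Fin N) (Fin n) ℝ)
    (hdet : (Pᵀ * P).det ≠ 0) :
    HasFDerivAt (fun X : Matrix (Fin N) (Fin n) ℝ => (Xᵀ * X)⁻¹) (Dinv N n P) P := by
  have hU : IsUnit (Pᵀ * P) :=
    (Matrix.isUnit_iff_isUnit_det _).2 (isUnit_iff_ne_zero.2 hdet)
  have hu : (hU.unit : Matrix (Fin n) (Fin n) ℝ) = Pᵀ * P := hU.unit_spec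
  have hcoe : ((hU.unit⁻¹ : _ˣ) : Matrix (Fin n) (Fin n) ℝ) = (Pᵀ * P)⁻¹ := by
    rw [Matrix.nonsing_inv_eq_ringInverse]
    conv_rhs => rw [← hu]
    rw [Ring.inverse_unit]
  have h0 : HasFDerivAt Ring.inverse
      (-(ContinuousLinearMap.mulLeftRight ℝ _ (Pᵀ * P)⁻¹ (Pᵀ * P)⁻¹)) (Pᵀ * P) := by
    have := hasFDerivAt_ringInverse (𝕜 := ℝ) hU.unit
    rwa [hu, hcoe] at this
  have hcomp := HasFDerivAt.comp (g := Ring.inverse) (f := fun X : Matrix (Fin N) (Fin n) ℝ => Xᵀ * X) P h0 (hasFDerivAt_A P)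
  have hfun : (fun X : Matrix (Fin N) (Fin n) ℝ => (Xᵀ * X)⁻¹)
      = Ring.inverse ∘ (fun X => Xᵀ * X) :=
    funext fun X => Matrix.nonsing_inv_eq_ringInverse _
  rw [hfun]
  exact hcomp

lemma hasFDerivAt_mfun {N n : ℕ} (P : Matrix (Fin N) (Fin n) ℝ)
    (hdet : (Pᵀ * P).det ≠ 0) :
    HasFDerivAt (mfun N n)
      (ContinuousLinearMap.id ℝ _ -
        ((show Matrix (Fin N) (Fin n) ℝ →L[ℝ] Matrix (Fin N) (Fin n) ℝ from (((n : ℝ))⁻¹ * (Pᵀ * P).trace) •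
            ((mulCLM N n n).precompR (Matrix (Fin N) (Fin n) ℝ) P (Dinv N n P)
              + (mulCLM N n n).precompL (Matrix (Fin N) (Fin n) ℝ) (ContinuousLinearMap.id ℝ _) ((Pᵀ * P)⁻¹)))
          + (((n : ℝ))⁻¹ • ((traceCLM n).comp (DA N n P))).smulRight
              (P * (Pᵀ * P)⁻¹))) P := by
  have hf3 : HasFDerivAt (fun X : Matrix (Fin N) (Fin n) ℝ => X * (Xᵀ * X)⁻¹)
      ((mulCLM N n n).precompR (Matrix (Fin N) (Fin n) ℝ) P (Dinv N n P)
        + (mulCLM N n n).precompL (Matrix (Fin N) (Fin n) ℝ) (ContinuousLinearMap.id ℝ _) ((Pᵀ * P)⁻¹)) P :=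
    (mulCLM N n n).hasFDerivAt_of_bilinear (hasFDerivAt_id P) (hasFDerivAt_invA P hdet)
  have hc : HasFDerivAt (fun X : Matrix (Fin N) (Fin n) ℝ => ((n : ℝ))⁻¹ * (Xᵀ * X).trace)
      (((n : ℝ))⁻¹ • ((traceCLM n).comp (DA N n P))) P :=
    (((traceCLM n).hasFDerivAt).comp P (hasFDerivAt_A P)).const_mul _
  exact (hasFDerivAt_id P).sub (hc.smul hf3)

lemma differentiableAt_sfun {N n : ℕ} (P : Matrix (Fin N) (Fin n) ℝ)
    (hpos : 0 < (Pᵀ * P).det) :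
    DifferentiableAt ℝ (sfun N n) P := by
  have hdet : (Pᵀ * P).det ≠ 0 := hpos.ne'
  show DifferentiableAt ℝ (fun X => 2 / (Xᵀ * X).det ^ ((1 : ℝ) / n)) P
  have hg : DifferentiableAt ℝ (fun X : Matrix (Fin N) (Fin n) ℝ => (Xᵀ * X).det) P :=
    differentiable_detA P
  have hr : DifferentiableAt ℝ (fun X : Matrix (Fin N) (Fin n) ℝ =>
      (Xᵀ * X).det ^ ((1 : ℝ) / n)) P := hg.rpow_const (Or.inl hdet)
  have hne : (Pᵀ * P).det ^ ((1 : ℝ) / n) ≠ 0 := (Real.rpow_pos_of_pos hpos _).ne'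
  have : (fun X : Matrix (Fin N) (Fin n) ℝ => 2 / (Xᵀ * X).det ^ ((1 : ℝ) / n))
      = fun X => 2 * ((Xᵀ * X).det ^ ((1 : ℝ) / n))⁻¹ := by
    funext X; rw [div_eq_mul_inv]
  rw [this]
  exact (hr.inv hne).const_mul 2

/-- the map `K_P : S⁺ → ℝ^{N×n}` is differentiable at every `P ∈ S⁺`, and
its derivative `DK_P(P)[Q]` satisfies, for every `w ∈ ℝ^N` with `K_P(P)ᵀw = 0` and
every direction `Q`:
`(DK_P(P)[Q])ᵀ·w = (2/det(PᵀP)^(1/n))·[ (I − (|P|²/n)(PᵀP)⁻¹)·Qᵀw + (PᵀP)⁻¹·S(QᵀP+PᵀQ)·Pᵀw ]`. -/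
theorem dilGrad_hasFDerivAt_normal_identity (n N : ℕ) (hn : 1 ≤ n) (hnN : n ≤ N)
    (P : Matrix (Fin N) (Fin n) ℝ) (hP : 0 < (Pᵀ * P).det) :
    ∃ L : Matrix (Fin N) (Fin n) ℝ →L[ℝ] Matrix (Fin N) (Fin n) ℝ,
      HasFDerivAt dilGrad L P ∧
      ∀ w : Fin N → ℝ, (dilGrad P)ᵀ.mulVec w = 0 →
      ∀ Q : Matrix (Fin N) (Fin n) ℝ,
        (L Q)ᵀ.mulVec w =
          (2 / (Pᵀ * P).det ^ ((1 : ℝ) / n)) •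
            ((1 - ((Pᵀ * P).trace / (n : ℝ)) • (Pᵀ * P)⁻¹).mulVec (Qᵀ.mulVec w)
              + ((Pᵀ * P)⁻¹ * ahl (Qᵀ * P + Pᵀ * Q)).mulVec (Pᵀ.mulVec w)) := by
  have hdet : (Pᵀ * P).det ≠ 0 := hP.ne'
  set Dm : Matrix (Fin N) (Fin n) ℝ →L[ℝ] Matrix (Fin N) (Fin n) ℝ :=
    ContinuousLinearMap.id ℝ _ -
      ((show Matrix (Fin N) (Fin n) ℝ →L[ℝ] Matrix (Fin N) (Fin n) ℝ from (((n : ℝ))⁻¹ * (Pᵀ * P).trace) •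
          ((mulCLM N n n).precompR (Matrix (Fin N) (Fin n) ℝ) P (Dinv N n P)
            + (mulCLM N n n).precompL (Matrix (Fin N) (Fin n) ℝ) (ContinuousLinearMap.id ℝ _) ((Pᵀ * P)⁻¹)))
        + (((n : ℝ))⁻¹ • ((traceCLM n).comp (DA N n P))).smulRight
            (P * (Pᵀ * P)⁻¹)) with hDm
  set L0 : Matrix (Fin N) (Fin n) ℝ →L[ℝ] Matrix (Fin N) (Fin n) ℝ :=
    sfun N n P • Dm + (fderiv ℝ (sfun N n) P).smulRight (mfun N n P) with hL0
  have hsm : HasFDerivAt (fun X => sfun N n X • mfun N n X) L0 P :=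
    (differentiableAt_sfun P hP).hasFDerivAt.smul (hasFDerivAt_mfun P hdet)
  have heq : dilGrad =ᶠ[nhds P] fun X => sfun N n X • mfun N n X := by
    have hopen : IsOpen {X : Matrix (Fin N) (Fin n) ℝ | (Xᵀ * X).det ≠ 0} :=
      isOpen_compl_singleton.preimage differentiable_detA.continuous
    filter_upwards [hopen.mem_nhds hdet] with X hX
    exact dilGrad_eq X hX
  have hdil : HasFDerivAt dilGrad L0 P := hsm.congr_of_eventuallyEq heq
  refine ⟨L0, hdil, ?_⟩
  intro w hw Q
  -- abbreviations
  have hAit : ((Pᵀ * P)⁻¹)ᵀ = (Pᵀ * P)⁻¹ := by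
    rw [Matrix.transpose_nonsing_inv, Matrix.transpose_mul, Matrix.transpose_transpose]
  have hs0 : sfun N n P ≠ 0 := by
    have hpow : 0 < (Pᵀ * P).det ^ ((1 : ℝ) / n) := Real.rpow_pos_of_pos hP _
    exact (div_pos two_pos hpow).ne'
  have hmw : (mfun N n P)ᵀ.mulVec w = 0 := by
    have h1 := hw
    rw [dilGrad_eq P hdet, Matrix.transpose_smul, Matrix.smul_mulVec] at h1
    exact (smul_eq_zero.1 h1).resolve_left hs0
  have key : (((n : ℝ))⁻¹ * (Pᵀ * P).trace) • ((Pᵀ * P)⁻¹.mulVec (Pᵀ.mulVec w))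
      = Pᵀ.mulVec w := by
    have h2 := hmw
    simp only [mfun] at h2
    rw [Matrix.transpose_sub, Matrix.transpose_smul, Matrix.transpose_mul, hAit,
      Matrix.sub_mulVec, Matrix.smul_mulVec, ← Matrix.mulVec_mulVec] at h2
    exact (sub_eq_zero.1 h2).symm
  have hDmQ : Dm Q = Q - ((((n : ℝ))⁻¹ * (Pᵀ * P).trace) •
        (P * (-((Pᵀ * P)⁻¹ * (Pᵀ * Q + Qᵀ * P) * (Pᵀ * P)⁻¹)) + Q * (Pᵀ * P)⁻¹)
      + (((n : ℝ))⁻¹ * (Pᵀ * Q + Qᵀ * P).trace) • (P * (Pᵀ * P)⁻¹)) := by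
    simp only [hDm, ContinuousLinearMap.coe_sub', Pi.sub_apply, ContinuousLinearMap.id_apply,
      ContinuousLinearMap.add_apply, ContinuousLinearMap.coe_smul', Pi.smul_apply,
      ContinuousLinearMap.smulRight_apply, ContinuousLinearMap.comp_apply,
      ContinuousLinearMap.precompR_apply, ContinuousLinearMap.precompL_apply,
      ContinuousLinearMap.compL_apply, ContinuousLinearMap.flip_apply,
      mulCLM_apply, traceCLM_apply, DA_apply, Dinv_apply, smul_eq_mul]
    rfl
  have hL0Q : L0 Q = sfun N n P • Dm Q + (fderiv ℝ (sfun N n) P Q) • mfun N n P := by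
    rw [hL0]
    simp [ContinuousLinearMap.add_apply, ContinuousLinearMap.coe_smul', Pi.smul_apply,
      ContinuousLinearMap.smulRight_apply]
  rw [hL0Q, hDmQ, Matrix.transpose_add, Matrix.transpose_smul, Matrix.transpose_smul,
    Matrix.add_mulVec, Matrix.smul_mulVec, Matrix.smul_mulVec, hmw, smul_zero,
    add_zero]
  rw [show sfun N n P = 2 / (Pᵀ * P).det ^ ((1 : ℝ) / n) from rfl]
  congr 1
  have k1 : (((n : ℝ))⁻¹ * (Pᵀ * P).trace) •
      ((Pᵀ * P)⁻¹ *ᵥ (Pᵀ *ᵥ (Q *ᵥ ((Pᵀ * P)⁻¹ *ᵥ (Pᵀ *ᵥ w)))))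
      = (Pᵀ * P)⁻¹ *ᵥ (Pᵀ *ᵥ (Q *ᵥ (Pᵀ *ᵥ w))) := by
    rw [← Matrix.mulVec_smul, ← Matrix.mulVec_smul, ← Matrix.mulVec_smul, key]
  have k2 : (((n : ℝ))⁻¹ * (Pᵀ * P).trace) •
      ((Pᵀ * P)⁻¹ *ᵥ (Qᵀ *ᵥ (P *ᵥ ((Pᵀ * P)⁻¹ *ᵥ (Pᵀ *ᵥ w)))))
      = (Pᵀ * P)⁻¹ *ᵥ (Qᵀ *ᵥ (P *ᵥ (Pᵀ *ᵥ w))) := by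
    rw [← Matrix.mulVec_smul, ← Matrix.mulVec_smul, ← Matrix.mulVec_smul, key]
  have htr : (Qᵀ * P + Pᵀ * Q).trace = (Pᵀ * Q + Qᵀ * P).trace := by rw [add_comm]
  simp only [ahl, htr, Matrix.transpose_sub, Matrix.transpose_add, Matrix.transpose_smul,
    Matrix.transpose_mul, Matrix.transpose_neg, Matrix.transpose_transpose,
    Matrix.transpose_one, hAit, Matrix.sub_mulVec, Matrix.add_mulVec, Matrix.neg_mulVec,
    Matrix.smul_mulVec, Matrix.one_mulVec, Matrix.mul_add, Matrix.add_mul,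
    Matrix.mul_one, ← Matrix.mulVec_mulVec, Matrix.mulVec_add, Matrix.mulVec_sub,
    Matrix.mulVec_smul, Matrix.mulVec_neg, smul_add, smul_sub, smul_neg]
  rw [← k1, ← k2]
  module
end

section
/- Let n = 2 ≤ N, let Ω ⊆ ℝ² be open and connected, and let u : Ω → ℝ^N be a C² immersion solving the tangential system K_P(Du(x))·∇(K∘Du)(x) = 0 on Ω. Then the rank of S(Du(x)ᵀDu(x)) is the same at every x ∈ Ω and equals either 0 or 2. If the rank is 0 everywhere, then K(Du) ≡ 2 and u is conformal: Du(x)ᵀDu(x) = (|Du(x)|²/2)·I for all x ∈ Ω. If the rank is 2 everywhere, then there is a constant c > 2 with K(Du) ≡ c on Ω. -/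
open Matrix

/-- The dilation function `K(P) = |P|² / det(PᵀP)^(1/n)`, where `|P|² = tr(PᵀP)`. -/
noncomputable def dil {N n : ℕ} (P : Matrix (Fin N) (Fin n) ℝ) : ℝ :=
  (Pᵀ * P).trace / (Pᵀ * P).det ^ ((1 : ℝ) / n)

/-- The Jacobian matrix `Du(x) ∈ ℝ^{N×n}` of a map `u : ℝⁿ → ℝ^N`. -/
noncomputable def jac {n N : ℕ} (u : EuclideanSpace ℝ (Fin n) → (Fin N → ℝ))
    (x : EuclideanSpace ℝ (Fin n)) : Matrix (Fin N) (Fin n) ℝ :=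
  Matrix.of fun α i => fderiv ℝ u x (EuclideanSpace.single i 1) α

/-- The gradient of a scalar function on `ℝⁿ`. -/
noncomputable def egrad {n : ℕ} (f : EuclideanSpace ℝ (Fin n) → ℝ)
    (x : EuclideanSpace ℝ (Fin n)) : Fin n → ℝ :=
  fun i => fderiv ℝ f x (EuclideanSpace.single i 1)

lemma dil_two {N : ℕ} (P : Matrix (Fin N) (Fin 2) ℝ) :
    dil P = (Pᵀ*P).trace / (Pᵀ*P).det ^ ((1:ℝ)/2) := by norm_num [dil]

section sym
variable (B : Matrix (Fin 2) (Fin 2) ℝ)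

lemma ahl_apply (hsym : Bᵀ = B) : ahl B = B - (B.trace/2) • 1 := by
  simp [ahl, hsym, two_smul, smul_add]
  ext i j
  simp [Matrix.add_apply, Matrix.smul_apply]
  ring

lemma trace_pos (hsym : B 1 0 = B 0 1) (ha : 0 ≤ B 0 0) (hd : 0 ≤ B 1 1)
    (hdet : 0 < B.det) : 0 < B.trace := by
  rw [Matrix.det_fin_two, hsym] at hdet
  rw [Matrix.trace_fin_two]
  nlinarith [sq_nonneg (B 0 1)]

lemma disc_nonneg (hsym : B 1 0 = B 0 1) : 4 * B.det ≤ B.trace ^ 2 := by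
  rw [Matrix.det_fin_two, Matrix.trace_fin_two, hsym]
  nlinarith [sq_nonneg (B 0 0 - B 1 1), sq_nonneg (B 0 1)]

lemma ahl_eq_zero_iff (hsym : Bᵀ = B) :
    ahl B = 0 ↔ (B 0 0 = B 1 1 ∧ B 0 1 = 0) := by
  rw [ahl_apply B hsym]
  constructor
  · intro h
    have h00 := congrFun (congrFun h 0) 0
    have h01 := congrFun (congrFun h 0) 1
    simp [Matrix.sub_apply, Matrix.smul_apply, Matrix.one_apply, Matrix.trace_fin_two] at h00 h01
    constructor
    · linarith
    · exact h01
  · rintro ⟨h1, h2⟩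
    have h3 : B 1 0 = 0 := by rw [← hsym]; simpa using h2
    ext i j
    fin_cases i <;> fin_cases j <;>
      simp [Matrix.sub_apply, Matrix.smul_apply, Matrix.one_apply, Matrix.trace_fin_two, h1, h2, h3]

end sym

section sym2
variable (B : Matrix (Fin 2) (Fin 2) ℝ)

lemma ahl_det_neg (hsym : Bᵀ = B) (h : ahl B ≠ 0) : (ahl B).det < 0 := by
  have hs : B 1 0 = B 0 1 := by conv_lhs => rw [← hsym, Matrix.transpose_apply]
  have hne : ¬(B 0 0 = B 1 1 ∧ B 0 1 = 0) := fun hc => h ((ahl_eq_zero_iff B hsym).2 hc)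
  rw [ahl_apply B hsym, Matrix.det_fin_two]
  simp only [Matrix.sub_apply, Matrix.smul_apply, Matrix.one_apply, Matrix.trace_fin_two]
  simp [hs]
  rcases (not_and_or.1 hne) with h1 | h1
  · have h2 : (B 0 0 - B 1 1) ≠ 0 := sub_ne_zero.2 h1
    have h3 : 0 < (B 0 0 - B 1 1) ^ 2 := by positivity
    nlinarith [sq_nonneg (B 0 1)]
  · have h3 : 0 < (B 0 1) ^ 2 := by positivity
    nlinarith [sq_nonneg (B 0 0 - B 1 1)]

lemma ahl_rank_two (hsym : Bᵀ = B) (h : ahl B ≠ 0) : (ahl B).rank = 2 := by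
  have hdet : (ahl B).det ≠ 0 := (ahl_det_neg B hsym h).ne
  have : IsUnit (ahl B) := (Matrix.isUnit_iff_isUnit_det _).2 (isUnit_iff_ne_zero.2 hdet)
  simpa using Matrix.rank_of_isUnit _ this

lemma trace_sq_eq_iff (hsym : Bᵀ = B) :
    B.trace ^ 2 = 4 * B.det ↔ (B 0 0 = B 1 1 ∧ B 0 1 = 0) := by
  have hs : B 1 0 = B 0 1 := by conv_lhs => rw [← hsym, Matrix.transpose_apply]
  rw [Matrix.det_fin_two, Matrix.trace_fin_two, hs]
  constructor
  · intro h
    constructor <;> nlinarith [sq_nonneg (B 0 0 - B 1 1), sq_nonneg (B 0 1)]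
  · rintro ⟨h1, h2⟩
    rw [h1, h2]; ring

end sym2

section dil
variable {N : ℕ} (P : Matrix (Fin N) (Fin 2) ℝ)

lemma B_sym : (Pᵀ*P)ᵀ = Pᵀ*P := by rw [Matrix.transpose_mul, Matrix.transpose_transpose]

lemma B_diag_nonneg (i : Fin 2) : 0 ≤ (Pᵀ*P) i i := by
  rw [Matrix.mul_apply]
  exact Finset.sum_nonneg fun α _ => by simp [Matrix.transpose_apply, mul_self_nonneg]

lemma dil_facts (hdet : 0 < (Pᵀ*P).det) :
    2 ≤ dil P ∧ (dil P = 2 ↔ ahl (Pᵀ*P) = 0) := by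
  set B := Pᵀ*P with hB
  have hsym : Bᵀ = B := B_sym P
  have hs : B 1 0 = B 0 1 := by conv_lhs => rw [← hsym, Matrix.transpose_apply]
  have ht : 0 < B.trace := trace_pos B hs (B_diag_nonneg P 0) (B_diag_nonneg P 1) hdet
  have hdisc : 4 * B.det ≤ B.trace ^ 2 := disc_nonneg B hs
  set δ := B.det ^ ((1:ℝ)/2) with hδdef
  have hδ : 0 < δ := Real.rpow_pos_of_pos hdet _
  have hδ2 : δ ^ 2 = B.det := by
    rw [hδdef, ← Real.rpow_natCast (B.det ^ ((1:ℝ)/2)) 2, ← Real.rpow_mul hdet.le]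
    norm_num
  have hdil : dil P = B.trace / δ := dil_two P
  constructor
  · rw [hdil, le_div_iff₀ hδ]
    nlinarith
  · rw [hdil, div_eq_iff hδ.ne', ahl_eq_zero_iff B hsym, ← trace_sq_eq_iff B hsym]
    constructor
    · intro h; nlinarith
    · intro h; nlinarith

lemma conformal_of_ahl_zero (h : ahl (Pᵀ*P) = 0) :
    Pᵀ*P = (((Pᵀ*P).trace)/2) • (1 : Matrix (Fin 2) (Fin 2) ℝ) := by
  have := ahl_apply (Pᵀ*P) (B_sym P)
  rw [h] at this
  exact (sub_eq_zero.1 this.symm)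

end dil







lemma tang_aux {N : ℕ} (P : Matrix (Fin N) (Fin 2) ℝ) (hdet : 0 < (Pᵀ*P).det)
    (v : Fin 2 → ℝ) (h : (dilGrad P).mulVec v = 0) : (ahl (Pᵀ*P)).mulVec v = 0 := by
  have hδ : 0 < (Pᵀ*P).det ^ ((1:ℝ)/(2:ℕ)) := Real.rpow_pos_of_pos hdet _
  have hc : (2 / (Pᵀ*P).det ^ ((1:ℝ)/(2:ℕ))) ≠ 0 := by positivity
  rw [dilGrad, Matrix.smul_mulVec, smul_eq_zero] at h
  have h2 : (P * (Pᵀ*P)⁻¹ * ahl (Pᵀ*P)).mulVec v = 0 := by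
    rcases h with h | h
    · exact absurd h (by push_cast at hc ⊢; exact hc)
    · exact h
  have h3 := congrArg (Pᵀ.mulVec) h2
  rw [Matrix.mulVec_mulVec, Matrix.mulVec_zero] at h3
  have h4 : Pᵀ * (P * (Pᵀ*P)⁻¹ * ahl (Pᵀ*P)) = ahl (Pᵀ*P) := by
    rw [show Pᵀ * (P * (Pᵀ*P)⁻¹ * ahl (Pᵀ*P)) = ((Pᵀ*P) * (Pᵀ*P)⁻¹) * ahl (Pᵀ*P) by
      rw [← Matrix.mul_assoc, ← Matrix.mul_assoc],
      Matrix.mul_nonsing_inv _ (isUnit_iff_ne_zero.2 hdet.ne'), Matrix.one_mul]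
  rwa [h4] at h3

lemma vec_zero_of_ahl {B : Matrix (Fin 2) (Fin 2) ℝ} {v : Fin 2 → ℝ}
    (hdet : (ahl B).det ≠ 0) (h : (ahl B).mulVec v = 0) : v = 0 := by
  have h3 := congrArg ((ahl B)⁻¹.mulVec) h
  rwa [Matrix.mulVec_mulVec, Matrix.nonsing_inv_mul _ (isUnit_iff_ne_zero.2 hdet),
    Matrix.one_mulVec, Matrix.mulVec_zero] at h3

lemma fderiv_eq_zero_of_egrad {f : EuclideanSpace ℝ (Fin 2) → ℝ}
    {x : EuclideanSpace ℝ (Fin 2)} (h : egrad f x = 0) : fderiv ℝ f x = 0 := by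
  refine ContinuousLinearMap.coe_injective
    (Module.Basis.ext (EuclideanSpace.basisFun (Fin 2) ℝ).toBasis fun i => ?_)
  have := congrFun h i
  simp only [egrad] at this
  simp [OrthonormalBasis.coe_toBasis, EuclideanSpace.basisFun_apply, this]

section diff
variable {N : ℕ} {u : EuclideanSpace ℝ (Fin 2) → (Fin N → ℝ)}
  {Ω : Set (EuclideanSpace ℝ (Fin 2))}

lemma jac_entry_diff (hΩ : IsOpen Ω) (hu : ContDiffOn ℝ 2 u Ω) (α : Fin N) (i : Fin 2) :
    DifferentiableOn ℝ (fun y => jac u y α i) Ω := by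
  have h1 : ContDiffOn ℝ 1 (fderiv ℝ u) Ω := hu.fderiv_of_isOpen hΩ (by norm_num)
  have h2 : DifferentiableOn ℝ (fderiv ℝ u) Ω := h1.differentiableOn one_ne_zero
  have h3 : DifferentiableOn ℝ (fun y => fderiv ℝ u y (EuclideanSpace.single i 1)) Ω := by
    simpa [Function.comp_def] using (ContinuousLinearMap.apply ℝ (Fin N → ℝ)
      (EuclideanSpace.single i 1)).differentiable.comp_differentiableOn h2
  have h4 := (ContinuousLinearMap.proj (R := ℝ) (φ := fun _ : Fin N => ℝ)
      α).differentiable.comp_differentiableOn h3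
  simpa [jac, Function.comp_def] using h4

lemma B_entry_diffAt (hΩ : IsOpen Ω) (hu : ContDiffOn ℝ 2 u Ω)
    {x : EuclideanSpace ℝ (Fin 2)} (hx : x ∈ Ω) (i j : Fin 2) :
    DifferentiableAt ℝ (fun y => ((jac u y)ᵀ * jac u y) i j) x := by
  have he : ∀ (α : Fin N) (k : Fin 2), DifferentiableAt ℝ (fun y => jac u y α k) x :=
    fun α k => (jac_entry_diff hΩ hu α k).differentiableAt (hΩ.mem_nhds hx)
  have : (fun y => ((jac u y)ᵀ * jac u y) i j)
      = fun y => ∑ α : Fin N, jac u y α i * jac u y α j := by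
    funext y; rw [Matrix.mul_apply]; simp [Matrix.transpose_apply]
  rw [this]
  exact DifferentiableAt.fun_sum fun α _ => (he α i).mul (he α j)

lemma dil_diffAt (hΩ : IsOpen Ω) (hu : ContDiffOn ℝ 2 u Ω)
    (himm : ∀ x ∈ Ω, 0 < ((jac u x)ᵀ * jac u x).det)
    {x : EuclideanSpace ℝ (Fin 2)} (hx : x ∈ Ω) :
    DifferentiableAt ℝ (fun y => dil (jac u y)) x := by
  have hB := B_entry_diffAt (u := u) hΩ hu hx
  have htr : DifferentiableAt ℝ (fun y => ((jac u y)ᵀ * jac u y).trace) x := by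
    have : (fun y => ((jac u y)ᵀ * jac u y).trace)
        = fun y => ((jac u y)ᵀ * jac u y) 0 0 + ((jac u y)ᵀ * jac u y) 1 1 := by
      funext y; rw [Matrix.trace_fin_two]
    rw [this]; exact (hB 0 0).add (hB 1 1)
  have hdet : DifferentiableAt ℝ (fun y => ((jac u y)ᵀ * jac u y).det) x := by
    have : (fun y => ((jac u y)ᵀ * jac u y).det)
        = fun y => ((jac u y)ᵀ * jac u y) 0 0 * ((jac u y)ᵀ * jac u y) 1 1
          - ((jac u y)ᵀ * jac u y) 0 1 * ((jac u y)ᵀ * jac u y) 1 0 := by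
      funext y; rw [Matrix.det_fin_two]
    rw [this]; exact ((hB 0 0).mul (hB 1 1)).sub ((hB 0 1).mul (hB 1 0))
  have hdx : ((jac u x)ᵀ * jac u x).det ≠ 0 := (himm x hx).ne'
  have hden : DifferentiableAt ℝ
      (fun y => ((jac u y)ᵀ * jac u y).det ^ ((1:ℝ)/(2:ℕ))) x :=
    hdet.rpow_const (Or.inl hdx)
  have hne : ((jac u x)ᵀ * jac u x).det ^ ((1:ℝ)/(2:ℕ)) ≠ 0 :=
    (Real.rpow_pos_of_pos (himm x hx) _).ne'
  have heq : (fun y => dil (jac u y)) = fun y =>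
      ((jac u y)ᵀ * jac u y).trace * (((jac u y)ᵀ * jac u y).det ^ ((1:ℝ)/(2:ℕ)))⁻¹ := by
    funext y; simp only [dil, div_eq_mul_inv]
  rw [heq]
  exact htr.mul (hden.inv hne)

end diff

lemma const_on_connected {f : EuclideanSpace ℝ (Fin 2) → ℝ}
    {Ω : Set (EuclideanSpace ℝ (Fin 2))} (hΩ : IsOpen Ω) (hconn : IsConnected Ω)
    (hdiff : ∀ x ∈ Ω, DifferentiableAt ℝ f x) (hz : ∀ x ∈ Ω, fderiv ℝ f x = 0) :
    ∀ x ∈ Ω, ∀ y ∈ Ω, f x = f y := by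
  have hloc : ∀ x ∈ Ω, ∃ ε > 0, Metric.ball x ε ⊆ Ω ∧ ∀ y ∈ Metric.ball x ε, f y = f x := by
    intro x hx
    obtain ⟨ε, hε, hsub⟩ := Metric.isOpen_iff.1 hΩ x hx
    refine ⟨ε, hε, hsub, fun y hy => ?_⟩
    refine (convex_ball x ε).is_const_of_fderivWithin_eq_zero
      (fun z hzb => (hdiff z (hsub hzb)).differentiableWithinAt) (fun z hzb => ?_)
      hy (Metric.mem_ball_self hε)
    rw [fderivWithin_of_isOpen Metric.isOpen_ball hzb]
    exact hz z (hsub hzb)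
  intro x hx y hy
  by_contra hne
  set A := {z | z ∈ Ω ∧ f z = f x} with hA
  set B := {z | z ∈ Ω ∧ f z ≠ f x} with hB'
  have hAopen : IsOpen A := by
    rw [Metric.isOpen_iff]
    rintro z ⟨hzΩ, hzf⟩
    obtain ⟨ε, hε, hsub, hconst⟩ := hloc z hzΩ
    exact ⟨ε, hε, fun w hw => ⟨hsub hw, (hconst w hw).trans hzf⟩⟩
  have hBopen : IsOpen B := by
    rw [Metric.isOpen_iff]
    rintro z ⟨hzΩ, hzf⟩
    obtain ⟨ε, hε, hsub, hconst⟩ := hloc z hzΩ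
    exact ⟨ε, hε, fun w hw => ⟨hsub hw, (hconst w hw).symm ▸ hzf⟩⟩
  have hcover : Ω ⊆ A ∪ B := fun z hz => by
    by_cases h : f z = f x
    · exact Or.inl ⟨hz, h⟩
    · exact Or.inr ⟨hz, h⟩
  have hAne : (Ω ∩ A).Nonempty := ⟨x, hx, hx, rfl⟩
  have hBne : (Ω ∩ B).Nonempty := ⟨y, hy, hy, fun h => hne h.symm⟩
  obtain ⟨z, _, ⟨_, hz1⟩, ⟨_, hz2⟩⟩ := hconn.isPreconnected A B hAopen hBopen hcover hAne hBne
  exact hz2 hz1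


/-- for `n = 2 ≤ N`, a `C²` immersion on connected open `Ω ⊆ ℝ²` solving the
tangential system has `rank S(DuᵀDu)` constant on `Ω`, equal to `0` or `2`; if the rank is
`0` then `K(Du) ≡ 2` and `u` is conformal, and if the rank is `2` then `K(Du) ≡ c` for
some constant `c > 2`. -/
theorem two_dim_rank_dichotomy (N : ℕ) (hN : 2 ≤ N)
    (Ω : Set (EuclideanSpace ℝ (Fin 2))) (hΩ : IsOpen Ω) (hconn : IsConnected Ω)
    (u : EuclideanSpace ℝ (Fin 2) → (Fin N → ℝ))
    (hu : ContDiffOn ℝ 2 u Ω)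
    (himm : ∀ x ∈ Ω, 0 < ((jac u x)ᵀ * jac u x).det)
    (htang : ∀ x ∈ Ω, (dilGrad (jac u x)).mulVec (egrad (fun y => dil (jac u y)) x) = 0) :
    ∃ r : ℕ, (r = 0 ∨ r = 2) ∧ (∀ x ∈ Ω, (ahl ((jac u x)ᵀ * jac u x)).rank = r) ∧
      (r = 0 → ∀ x ∈ Ω, dil (jac u x) = 2 ∧
        (jac u x)ᵀ * jac u x
          = ((((jac u x)ᵀ * jac u x).trace) / 2) • (1 : Matrix (Fin 2) (Fin 2) ℝ)) ∧
      (r = 2 → ∃ c : ℝ, 2 < c ∧ ∀ x ∈ Ω, dil (jac u x) = c) := by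
  obtain ⟨x₀, hx₀⟩ := hconn.nonempty
  have hge2 : ∀ x ∈ Ω, 2 ≤ dil (jac u x) := fun x hx => (dil_facts _ (himm x hx)).1
  have hiff : ∀ x ∈ Ω, (dil (jac u x) = 2 ↔ ahl ((jac u x)ᵀ * jac u x) = 0) :=
    fun x hx => (dil_facts _ (himm x hx)).2
  have hS : ∀ x ∈ Ω, (ahl ((jac u x)ᵀ * jac u x)).mulVec
      (egrad (fun y => dil (jac u y)) x) = 0 :=
    fun x hx => tang_aux _ (himm x hx) _ (htang x hx)
  have hfz : ∀ x ∈ Ω, fderiv ℝ (fun y => dil (jac u y)) x = 0 := by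
    intro x hx
    by_cases hzero : ahl ((jac u x)ᵀ * jac u x) = 0
    · have h2 : dil (jac u x) = 2 := (hiff x hx).2 hzero
      have hmin : IsLocalMin (fun y => dil (jac u y)) x := by
        refine Filter.eventually_of_mem (hΩ.mem_nhds hx) fun y hy => ?_
        simp only
        rw [h2]
        exact hge2 y hy
      exact hmin.fderiv_eq_zero
    · have hdet : (ahl ((jac u x)ᵀ * jac u x)).det ≠ 0 :=
        (ahl_det_neg _ (B_sym _) hzero).ne
      exact fderiv_eq_zero_of_egrad (vec_zero_of_ahl hdet (hS x hx))
  have hconst : ∀ x ∈ Ω, dil (jac u x) = dil (jac u x₀) :=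
    fun x hx => const_on_connected hΩ hconn
      (fun z hz => dil_diffAt hΩ hu himm hz) hfz x hx x₀ hx₀
  set c := dil (jac u x₀) with hc
  have hc2 : 2 ≤ c := hge2 x₀ hx₀
  rcases eq_or_lt_of_le hc2 with hceq | hclt
  · -- c = 2 : rank 0 everywhere
    refine ⟨0, Or.inl rfl, ?_, ?_, ?_⟩
    · intro x hx
      have : ahl ((jac u x)ᵀ * jac u x) = 0 :=
        (hiff x hx).1 ((hconst x hx).trans hceq.symm)
      rw [this]
      exact Matrix.rank_zero
    · intro _ x hx
      have h2 : dil (jac u x) = 2 := (hconst x hx).trans hceq.symm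
      exact ⟨h2, conformal_of_ahl_zero _ ((hiff x hx).1 h2)⟩
    · intro h02
      exact absurd h02 (by norm_num)
  · -- 2 < c : rank 2 everywhere
    refine ⟨2, Or.inr rfl, ?_, ?_, ?_⟩
    · intro x hx
      have hne2 : dil (jac u x) ≠ 2 := by rw [hconst x hx]; exact ne_of_gt hclt
      have : ahl ((jac u x)ᵀ * jac u x) ≠ 0 := fun h => hne2 ((hiff x hx).2 h)
      exact ahl_rank_two _ (B_sym _) this
    · intro h20
      exact absurd h20 (by norm_num)
    · intro _
      exact ⟨c, hclt, fun x hx => hconst x hx⟩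
end
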